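/- arXiv:2603.23250 — 2 statements merged into one kernel-verified Lean document; each statement's English description precedes it below -/
import Mathlib

section
/- Let f₁, f₂, f₃ : ℕ → ℂ be arithmetic functions supported on a finite set, let X, H > 0, and define S_f(α; x) := Σ_{x ≤ n ≤ x+2H} f(n) e(nα). Then Σ_{|h| ≤ H} (1 - |h|/H) Σ_{X ≤ n ≤ 2X} f₁(n) f₂(n+h) f₃(n+2h) = (1/(2H)) ∫_X^{2X} ∫_0^1 S_{f₁}(α; x) S_{f₃}(α; x) S_{f₂}(-2α; x) dα dx. -/
open MeasureTheory

/-- `e(α) = e^{2πiα}` -/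
noncomputable def e (α : ℝ) : ℂ := Complex.exp (2 * Real.pi * Complex.I * α)

/-- `S_f(α; x) = Σ_{x ≤ n ≤ x+2H} f(n) e(nα)` -/
noncomputable def S (H : ℝ) (f : ℕ → ℂ) (α x : ℝ) : ℂ :=
  ∑' n : ℕ, if x ≤ (n:ℝ) ∧ (n:ℝ) ≤ x + 2*H then f n * e (n * α) else 0

lemma e_mul_e (a b : ℝ) : e a * e b = e (a + b) := by
  unfold e; rw [← Complex.exp_add]; push_cast; ring_nf

lemma e_cont {g : ℝ → ℝ} (hg : Continuous g) : Continuous fun α => e (g α) := by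
  unfold e; fun_prop

lemma integral_e_int (m : ℤ) : (∫ α in (0:ℝ)..1, e ((m:ℝ) * α)) = if m = 0 then 1 else 0 := by
  have key : ∀ α : ℝ, e ((m:ℝ) * α) = Complex.exp ((2 * Real.pi * Complex.I * m) * α) := by
    intro α; unfold e; push_cast; ring_nf
  simp only [key]
  rcases eq_or_ne m 0 with hm | hm
  · simp [hm]
  · rw [if_neg hm]
    have hc : (2 * Real.pi * Complex.I * m : ℂ) ≠ 0 := by
      simp [Real.pi_ne_zero, Complex.I_ne_zero, Complex.ofReal_ne_zero, hm]
    rw [integral_exp_mul_complex hc]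
    have h2 : Complex.exp (2 * Real.pi * Complex.I * m * (1:ℝ)) = 1 := by
      push_cast; rw [mul_one]
      have := Complex.exp_int_mul_two_pi_mul_I m
      rw [← this]; ring_nf
    rw [h2]; simp

lemma S_eq_sum (H : ℝ) (f : ℕ → ℂ) (N : ℕ) (hf : ∀ n, f n ≠ 0 → (n:ℝ) < N) (β x : ℝ) :
    S H f β x = ∑ n ∈ Finset.range N,
      if x ≤ (n:ℝ) ∧ (n:ℝ) ≤ x + 2*H then f n * e (n*β) else 0 := by
  apply tsum_eq_sum
  intro n hn
  rcases eq_or_ne (f n) 0 with h|h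
  · simp [h]
  · exfalso
    simp only [Finset.mem_range, not_lt] at hn
    have h1 : (N:ℝ) ≤ n := by exact_mod_cast hn
    have := hf n h; linarith

lemma integral_ite_Icc (a b A B : ℝ) (c : ℂ) (h1 : A ≤ a) (h3 : b ≤ B)
    (hAB : A ≤ B) :
    (∫ x in A..B, (if a ≤ x ∧ x ≤ b then c else 0)) = if a ≤ b then (b - a) * c else 0 := by
  rcases le_or_gt a b with hab | hab
  · rw [if_pos hab]
    have heq : (fun x => if a ≤ x ∧ x ≤ b then c else 0) = Set.indicator (Set.Icc a b) (fun _ => c) := by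
      ext x; simp [Set.indicator, Set.mem_Icc]
    rw [intervalIntegral.integral_of_le hAB, heq,
      MeasureTheory.setIntegral_indicator measurableSet_Icc, MeasureTheory.setIntegral_const]
    have hv : (volume : Measure ℝ) (Set.Ioc A B ∩ Set.Icc a b) = ENNReal.ofReal (b - a) := by
      rw [Set.inter_comm]
      have hle : (volume : Measure ℝ) (Set.Icc a b ∩ Set.Ioc A B) ≤ ENNReal.ofReal (b - a) := by
        calc (volume : Measure ℝ) (Set.Icc a b ∩ Set.Ioc A B) ≤ volume (Set.Icc a b) :=
              measure_mono Set.inter_subset_left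
          _ = ENNReal.ofReal (b - a) := Real.volume_Icc
      have hge : ENNReal.ofReal (b - a) ≤ volume (Set.Icc a b ∩ Set.Ioc A B) := by
        calc ENNReal.ofReal (b - a) = volume (Set.Ioc a b) := Real.volume_Ioc.symm
          _ ≤ volume (Set.Icc a b ∩ Set.Ioc A B) := by
              apply measure_mono
              intro x hx
              exact ⟨Set.Ioc_subset_Icc_self hx, ⟨lt_of_le_of_lt h1 hx.1, le_trans hx.2 h3⟩⟩
      exact le_antisymm hle hge
    rw [measureReal_def, hv, ENNReal.toReal_ofReal (by linarith)]
    simp [Complex.real_smul]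
  · have hfun : ∀ x, (if a ≤ x ∧ x ≤ b then c else 0) = 0 := by
      intro x; rw [if_neg]; rintro ⟨hx1, hx2⟩; linarith
    simp only [hfun, if_neg (not_le.mpr hab)]
    simp

lemma intervalIntegrable_ite (a b A B : ℝ) (c : ℂ) :
    IntervalIntegrable (fun x => if a ≤ x ∧ x ≤ b then c else 0) volume A B := by
  have heq : (fun x => if a ≤ x ∧ x ≤ b then c else 0)
      = Set.indicator (Set.Icc a b) (fun _ => c) := by
    ext x; simp [Set.indicator, Set.mem_Icc]
  rw [heq, intervalIntegrable_iff]
  refine MeasureTheory.Integrable.indicator ?_ measurableSet_Icc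
  refine MeasureTheory.integrableOn_const ?_
  rw [Set.uIoc, Real.volume_Ioc]
  exact ENNReal.ofReal_ne_top

noncomputable def gterm (H : ℝ) (c : ℂ) (n₁ n₃ n₂ : ℕ) : ℝ → ℂ := fun x =>
  if ((x ≤ (n₁:ℝ) ∧ (n₁:ℝ) ≤ x + 2*H) ∧ (x ≤ (n₃:ℝ) ∧ (n₃:ℝ) ≤ x + 2*H) ∧
      (x ≤ (n₂:ℝ) ∧ (n₂:ℝ) ≤ x + 2*H)) ∧ ((n₁:ℤ) + (n₃:ℤ) = 2*(n₂:ℤ))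
  then c else 0

lemma gterm_eq (H : ℝ) (c : ℂ) (n₁ n₃ n₂ : ℕ) :
    gterm H c n₁ n₃ n₂ = fun x =>
      if max (max ((n₁:ℝ) - 2*H) ((n₃:ℝ) - 2*H)) ((n₂:ℝ) - 2*H) ≤ x ∧
         x ≤ min (min (n₁:ℝ) (n₃:ℝ)) (n₂:ℝ)
      then (if (n₁:ℤ) + (n₃:ℤ) = 2*(n₂:ℤ) then c else 0) else 0 := by
  funext x
  unfold gterm
  by_cases hQ : (n₁:ℤ) + (n₃:ℤ) = 2*(n₂:ℤ)
  · simp only [hQ, and_true, if_true]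
    refine if_congr ?_ rfl rfl
    simp only [max_le_iff, le_min_iff, sub_le_iff_le_add]
    tauto
  · simp [hQ]

lemma gterm_integrable (X H : ℝ) (c : ℂ) (n₁ n₃ n₂ : ℕ) :
    IntervalIntegrable (gterm H c n₁ n₃ n₂) volume X (2*X) := by
  rw [gterm_eq]
  exact intervalIntegrable_ite _ _ _ _ _

lemma gterm_integral (X H : ℝ) (c : ℂ) (n₁ n₃ n₂ : ℕ)
    (hX : 0 < X) (hH : 0 < H) (hHX : H ≤ X/8)
    (hc : c ≠ 0 → (X + 2*H ≤ (n₁:ℝ) ∧ (n₁:ℝ) ≤ 2*X - 4*H) ∧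
      (X + 2*H ≤ (n₃:ℝ) ∧ (n₃:ℝ) ≤ 2*X - 4*H) ∧
      (X + 2*H ≤ (n₂:ℝ) ∧ (n₂:ℝ) ≤ 2*X - 4*H)) :
    (∫ x in X..(2*X), gterm H c n₁ n₃ n₂ x)
    = if ((n₁:ℤ) + (n₃:ℤ) = 2*(n₂:ℤ)) ∧ |(n₁:ℝ) - (n₃:ℝ)| ≤ 2*H
      then ((2*H - |(n₁:ℝ) - (n₃:ℝ)| : ℝ) : ℂ) * c else 0 := by
  rcases eq_or_ne c 0 with rfl | hc0
  · simp [gterm]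
  rcases hc hc0 with ⟨⟨hn1a, hn1b⟩, ⟨hn3a, hn3b⟩, ⟨hn2a, hn2b⟩⟩
  rw [gterm_eq]
  by_cases hQ : (n₁:ℤ) + (n₃:ℤ) = 2*(n₂:ℤ)
  · simp only [hQ, if_true, true_and]
    have hr2 : (n₂:ℝ) = ((n₁:ℝ) + (n₃:ℝ))/2 := by
      have : (n₁:ℝ) + (n₃:ℝ) = 2*(n₂:ℝ) := by exact_mod_cast hQ
      linarith
    have hmid1 : (n₂:ℝ) ≤ max (n₁:ℝ) (n₃:ℝ) := by
      rcases le_total (n₁:ℝ) (n₃:ℝ) with h | h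
      · rw [max_eq_right h]; linarith
      · rw [max_eq_left h]; linarith
    have hmid2 : min (n₁:ℝ) (n₃:ℝ) ≤ (n₂:ℝ) := by
      rcases le_total (n₁:ℝ) (n₃:ℝ) with h | h
      · rw [min_eq_left h]; linarith
      · rw [min_eq_right h]; linarith
    have hmax : max (max ((n₁:ℝ) - 2*H) ((n₃:ℝ) - 2*H)) ((n₂:ℝ) - 2*H)
        = max (n₁:ℝ) (n₃:ℝ) - 2*H := by
      rw [max_sub_sub_right, max_sub_sub_right]
      congr 1
      exact max_eq_left hmid1
    have hmin : min (min (n₁:ℝ) (n₃:ℝ)) (n₂:ℝ) = min (n₁:ℝ) (n₃:ℝ) :=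
      min_eq_left hmid2
    have habs : |(n₁:ℝ) - (n₃:ℝ)| = max (n₁:ℝ) (n₃:ℝ) - min (n₁:ℝ) (n₃:ℝ) :=
      by rw [max_sub_min_eq_abs, abs_sub_comm]
    have hminX : min (n₁:ℝ) (n₃:ℝ) ≤ 2*X := le_trans (min_le_left _ _) (by linarith)
    have hmaxX : X ≤ max (n₁:ℝ) (n₃:ℝ) - 2*H := by
      have := le_max_left (n₁:ℝ) (n₃:ℝ); linarith
    rw [hmax, hmin,
      integral_ite_Icc _ _ _ _ _ hmaxX hminX (by linarith)]
    by_cases hcond : max (n₁:ℝ) (n₃:ℝ) - 2*H ≤ min (n₁:ℝ) (n₃:ℝ)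
    · rw [if_pos hcond, if_pos (by linarith)]
      have hval : min (n₁:ℝ) (n₃:ℝ) - (max (n₁:ℝ) (n₃:ℝ) - 2*H)
          = 2*H - |(n₁:ℝ) - (n₃:ℝ)| := by rw [habs]; ring
      rw [← hval]
      push_cast
      ring
    · rw [if_neg hcond, if_neg (fun h => hcond (by linarith))]
  · simp only [hQ, if_false, false_and, if_false]
    simp
lemma inner_integral (H : ℝ) (f₁ f₂ f₃ : ℕ → ℂ) (N : ℕ)
    (hf1 : ∀ n, f₁ n ≠ 0 → (n:ℝ) < N) (hf2 : ∀ n, f₂ n ≠ 0 → (n:ℝ) < N)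
    (hf3 : ∀ n, f₃ n ≠ 0 → (n:ℝ) < N) (x : ℝ) :
    (∫ α in (0:ℝ)..1, S H f₁ α x * S H f₃ α x * S H f₂ (-2*α) x)
    = ∑ n₁ ∈ Finset.range N, ∑ n₃ ∈ Finset.range N, ∑ n₂ ∈ Finset.range N,
        if ((x ≤ (n₁:ℝ) ∧ (n₁:ℝ) ≤ x + 2*H) ∧ (x ≤ (n₃:ℝ) ∧ (n₃:ℝ) ≤ x + 2*H) ∧
            (x ≤ (n₂:ℝ) ∧ (n₂:ℝ) ≤ x + 2*H)) ∧ ((n₁:ℤ) + (n₃:ℤ) = 2*(n₂:ℤ))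
        then f₁ n₁ * f₃ n₃ * f₂ n₂ else 0 := by
  simp only [S_eq_sum H f₁ N hf1, S_eq_sum H f₂ N hf2, S_eq_sum H f₃ N hf3]
  simp only [Finset.sum_mul, Finset.mul_sum]
  have hswap : ∀ (g : ℕ → ℕ → ℕ → ℂ),
      (∑ a ∈ Finset.range N, ∑ b ∈ Finset.range N, ∑ c ∈ Finset.range N, g a b c)
      = ∑ c ∈ Finset.range N, ∑ b ∈ Finset.range N, ∑ a ∈ Finset.range N, g a b c := by
    intro g
    calc (∑ a ∈ Finset.range N, ∑ b ∈ Finset.range N, ∑ c ∈ Finset.range N, g a b c)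
        = ∑ b ∈ Finset.range N, ∑ a ∈ Finset.range N, ∑ c ∈ Finset.range N, g a b c :=
          Finset.sum_comm
      _ = ∑ b ∈ Finset.range N, ∑ c ∈ Finset.range N, ∑ a ∈ Finset.range N, g a b c :=
          Finset.sum_congr rfl fun b _ => Finset.sum_comm
      _ = ∑ c ∈ Finset.range N, ∑ b ∈ Finset.range N, ∑ a ∈ Finset.range N, g a b c :=
          Finset.sum_comm
  rw [hswap]
  have hcont : ∀ (a b c : ℕ), Continuous fun α : ℝ =>
      ((if x ≤ (a:ℝ) ∧ (a:ℝ) ≤ x + 2*H then f₁ a * e (a*α) else 0) *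
        (if x ≤ (b:ℝ) ∧ (b:ℝ) ≤ x + 2*H then f₃ b * e (b*α) else 0)) *
        (if x ≤ (c:ℝ) ∧ (c:ℝ) ≤ x + 2*H then f₂ c * e (c*(-2*α)) else 0) := by
    intro a b c
    have h1 : Continuous fun α : ℝ => (if x ≤ (a:ℝ) ∧ (a:ℝ) ≤ x + 2*H then f₁ a * e (a*α) else 0) := by
      split_ifs with h
      · exact continuous_const.mul (e_cont (by fun_prop))
      · exact continuous_const
    have h2 : Continuous fun α : ℝ => (if x ≤ (b:ℝ) ∧ (b:ℝ) ≤ x + 2*H then f₃ b * e (b*α) else 0) := by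
      split_ifs with h
      · exact continuous_const.mul (e_cont (by fun_prop))
      · exact continuous_const
    have h3 : Continuous fun α : ℝ => (if x ≤ (c:ℝ) ∧ (c:ℝ) ≤ x + 2*H then f₂ c * e (c*(-2*α)) else 0) := by
      split_ifs with h
      · exact continuous_const.mul (e_cont (by fun_prop))
      · exact continuous_const
    exact (h1.mul h2).mul h3
  rw [intervalIntegral.integral_finset_sum (fun c _ =>
    (continuous_finset_sum _ fun b _ => continuous_finset_sum _ fun a _ =>
      hcont a b c).intervalIntegrable _ _)]
  refine Finset.sum_congr rfl fun n₂ _ => ?_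
  rw [intervalIntegral.integral_finset_sum (fun b _ =>
    (continuous_finset_sum _ fun a _ => hcont a b n₂).intervalIntegrable _ _)]
  refine Finset.sum_congr rfl fun n₃ _ => ?_
  rw [intervalIntegral.integral_finset_sum (fun a _ => (hcont a n₃ n₂).intervalIntegrable _ _)]
  refine Finset.sum_congr rfl fun n₁ _ => ?_
  by_cases hc1 : x ≤ (n₁:ℝ) ∧ (n₁:ℝ) ≤ x + 2*H
  · by_cases hc3 : x ≤ (n₃:ℝ) ∧ (n₃:ℝ) ≤ x + 2*H
    · by_cases hc2 : x ≤ (n₂:ℝ) ∧ (n₂:ℝ) ≤ x + 2*H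
      · simp only [if_pos hc1, if_pos hc2, if_pos hc3]
        have hpt : ∀ α : ℝ,
            ((f₁ n₁ * e (↑n₁*α)) * (f₃ n₃ * e (↑n₃*α))) * (f₂ n₂ * e (↑n₂*(-2*α)))
            = (f₁ n₁ * f₃ n₃ * f₂ n₂) * e ((((n₁:ℤ) + n₃ - 2*n₂ : ℤ):ℝ)*α) := by
          intro α
          rw [show ((f₁ n₁ * e (↑n₁*α)) * (f₃ n₃ * e (↑n₃*α))) * (f₂ n₂ * e (↑n₂*(-2*α)))
            = (f₁ n₁ * f₃ n₃ * f₂ n₂) * (e (↑n₁*α) * e (↑n₃*α) * e (↑n₂*(-2*α))) from by ring,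
            e_mul_e, e_mul_e]
          congr 2
          push_cast; ring
        simp only [hpt]
        rw [intervalIntegral.integral_const_mul, integral_e_int]
        by_cases he : (n₁:ℤ) + (n₃:ℤ) = 2*(n₂:ℤ)
        · rw [if_pos (by omega), if_pos ⟨⟨hc1, hc3, hc2⟩, he⟩, mul_one]
        · rw [if_neg (by omega), if_neg (by tauto), mul_zero]
      · simp only [if_neg hc2, mul_zero, intervalIntegral.integral_zero]
        rw [if_neg (by tauto)]
    · simp only [if_neg hc3, mul_zero, zero_mul, intervalIntegral.integral_zero]
      rw [if_neg (by tauto)]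
  · simp only [if_neg hc1, zero_mul, intervalIntegral.integral_zero]
    rw [if_neg (by tauto)]

/-- The ternary correlation sum equals the circle-method integral. -/
theorem stmt2 (f₁ f₂ f₃ : ℕ → ℂ) (X H : ℝ) (hX : 0 < X) (hH : 0 < H) (hHX : H ≤ X / 8)
    (h1 : ∀ n : ℕ, f₁ n ≠ 0 → X + 2*H ≤ (n:ℝ) ∧ (n:ℝ) ≤ 2*X - 4*H)
    (h2 : ∀ n : ℕ, f₂ n ≠ 0 → X + 2*H ≤ (n:ℝ) ∧ (n:ℝ) ≤ 2*X - 4*H)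
    (h3 : ∀ n : ℕ, f₃ n ≠ 0 → X + 2*H ≤ (n:ℝ) ∧ (n:ℝ) ≤ 2*X - 4*H) :
    (∑' h : ℤ, if |(h:ℝ)| ≤ H then
        (1 - |(h:ℝ)|/H) *
          ∑' n : ℕ, (if X ≤ (n:ℝ) ∧ (n:ℝ) ≤ 2*X then
            f₁ n * f₂ ((n:ℤ) + h).toNat * f₃ ((n:ℤ) + 2*h).toNat else 0)
      else 0)
    = (1/(2*H) : ℂ) *
        ∫ x in X..(2*X), ∫ α in (0:ℝ)..1,
          S H f₁ α x * S H f₃ α x * S H f₂ (-2*α) x := by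
  set N : ℕ := ⌈2*X⌉₊ + 1 with hN
  set M : ℕ := ⌈H⌉₊ with hM
  have hNgt : (2*X : ℝ) < N := by
    have := Nat.le_ceil (2*X)
    have h2 : ((⌈2*X⌉₊ : ℕ) : ℝ) < N := by rw [hN]; push_cast; linarith
    linarith
  have hMH : H ≤ (M:ℝ) := Nat.le_ceil H
  have hf1 : ∀ n, f₁ n ≠ 0 → (n:ℝ) < N := fun n h => by
    have := h1 n h; linarith [this.2]
  have hf2 : ∀ n, f₂ n ≠ 0 → (n:ℝ) < N := fun n h => by
    have := h2 n h; linarith [this.2]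
  have hf3 : ∀ n, f₃ n ≠ 0 → (n:ℝ) < N := fun n h => by
    have := h3 n h; linarith [this.2]
  -- rewrite inner integral
  rw [intervalIntegral.integral_congr
    (g := fun x => ∑ n₁ ∈ Finset.range N, ∑ n₃ ∈ Finset.range N, ∑ n₂ ∈ Finset.range N,
      gterm H (f₁ n₁ * f₃ n₃ * f₂ n₂) n₁ n₃ n₂ x)
    (fun x _ => inner_integral H f₁ f₂ f₃ N hf1 hf2 hf3 x)]
  have hInt : ∀ (s : Finset ℕ) (g : ℕ → ℝ → ℂ),
      (∀ i ∈ s, IntervalIntegrable (g i) volume X (2*X)) →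
      IntervalIntegrable (fun x => ∑ i ∈ s, g i x) volume X (2*X) := by
    intro s g hg
    have h0 := IntervalIntegrable.sum s hg
    have hfe : (∑ i ∈ s, g i) = fun x => ∑ i ∈ s, g i x := by
      funext x; simp [Finset.sum_apply]
    rwa [hfe] at h0
  rw [intervalIntegral.integral_finset_sum
    (f := fun n₁ x => ∑ n₃ ∈ Finset.range N, ∑ n₂ ∈ Finset.range N,
      gterm H (f₁ n₁ * f₃ n₃ * f₂ n₂) n₁ n₃ n₂ x)
    (fun n₁ _ => hInt _ _ (fun n₃ _ => hInt _ _ (fun n₂ _ => gterm_integrable X H _ n₁ n₃ n₂)))]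
  have hsum1 : ∀ n₁ : ℕ,
      (∫ x in X..(2*X), ∑ n₃ ∈ Finset.range N, ∑ n₂ ∈ Finset.range N,
        gterm H (f₁ n₁ * f₃ n₃ * f₂ n₂) n₁ n₃ n₂ x)
      = ∑ n₃ ∈ Finset.range N, ∑ n₂ ∈ Finset.range N,
          ∫ x in X..(2*X), gterm H (f₁ n₁ * f₃ n₃ * f₂ n₂) n₁ n₃ n₂ x := by
    intro n₁
    rw [intervalIntegral.integral_finset_sum
      (f := fun n₃ x => ∑ n₂ ∈ Finset.range N, gterm H (f₁ n₁ * f₃ n₃ * f₂ n₂) n₁ n₃ n₂ x)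
      (fun n₃ _ => hInt _ _ (fun n₂ _ => gterm_integrable X H _ n₁ n₃ n₂))]
    refine Finset.sum_congr rfl fun n₃ _ => ?_
    rw [intervalIntegral.integral_finset_sum
      (f := fun n₂ x => gterm H (f₁ n₁ * f₃ n₃ * f₂ n₂) n₁ n₃ n₂ x)
      (fun n₂ _ => gterm_integrable X H _ n₁ n₃ n₂)]
  simp only [hsum1]
  have hterm : ∀ n₁ n₃ n₂ : ℕ,
      (∫ x in X..(2*X), gterm H (f₁ n₁ * f₃ n₃ * f₂ n₂) n₁ n₃ n₂ x)
      = if ((n₁:ℤ) + (n₃:ℤ) = 2*(n₂:ℤ)) ∧ |(n₁:ℝ) - (n₃:ℝ)| ≤ 2*H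
        then ((2*H - |(n₁:ℝ) - (n₃:ℝ)| : ℝ) : ℂ) * (f₁ n₁ * f₃ n₃ * f₂ n₂) else 0 := by
    intro n₁ n₃ n₂
    apply gterm_integral X H _ n₁ n₃ n₂ hX hH hHX
    intro hc
    have hc1 : f₁ n₁ ≠ 0 := fun h => hc (by simp [h])
    have hc3 : f₃ n₃ ≠ 0 := fun h => hc (by simp [h])
    have hc2 : f₂ n₂ ≠ 0 := fun h => hc (by simp [h])
    exact ⟨h1 n₁ hc1, h3 n₃ hc3, h2 n₂ hc2⟩
  simp only [hterm]
  have htsum_n : ∀ h : ℤ, (∑' n : ℕ, (if X ≤ (n:ℝ) ∧ (n:ℝ) ≤ 2*X then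
        f₁ n * f₂ ((n:ℤ) + h).toNat * f₃ ((n:ℤ) + 2*h).toNat else 0))
      = ∑ n ∈ Finset.range N, (if X ≤ (n:ℝ) ∧ (n:ℝ) ≤ 2*X then
        f₁ n * f₂ ((n:ℤ) + h).toNat * f₃ ((n:ℤ) + 2*h).toNat else 0) := by
    intro h
    apply tsum_eq_sum
    intro n hn
    rw [if_neg]
    rintro ⟨-, hb⟩
    simp only [Finset.mem_range, not_lt] at hn
    have : (N:ℝ) ≤ n := by exact_mod_cast hn
    linarith
  simp only [htsum_n]
  rw [tsum_eq_sum (s := Finset.Icc (-(M:ℤ)) (M:ℤ)) (by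
    intro h hh
    rw [if_neg]
    intro habs
    have ha1 : |(h:ℝ)| ≤ (M:ℝ) := le_trans habs hMH
    have ha2 : |h| ≤ (M:ℤ) := by exact_mod_cast ha1
    simp only [Finset.mem_Icc, not_and_or, not_le] at hh
    have := abs_le.mp ha2
    omega)]
  have hG : ∀ h ∈ Finset.Icc (-(M:ℤ)) (M:ℤ),
      (if |(h:ℝ)| ≤ H then
        (1 - ((|(h:ℝ)| : ℝ) : ℂ)/(H:ℂ)) * ∑ n ∈ Finset.range N, (if X ≤ (n:ℝ) ∧ (n:ℝ) ≤ 2*X then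
          f₁ n * f₂ ((n:ℤ) + h).toNat * f₃ ((n:ℤ) + 2*h).toNat else 0)
      else 0)
      = ∑ n ∈ Finset.range N, (if |(h:ℝ)| ≤ H ∧ (X ≤ (n:ℝ) ∧ (n:ℝ) ≤ 2*X) then
          (1 - ((|(h:ℝ)| : ℝ) : ℂ)/(H:ℂ)) * (f₁ n * f₂ ((n:ℤ) + h).toNat * f₃ ((n:ℤ) + 2*h).toNat)
        else 0) := by
    intro h _
    by_cases hh : |(h:ℝ)| ≤ H
    · rw [if_pos hh, Finset.mul_sum]
      refine Finset.sum_congr rfl fun n _ => ?_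
      by_cases hn : X ≤ (n:ℝ) ∧ (n:ℝ) ≤ 2*X
      · rw [if_pos hn, if_pos ⟨hh, hn⟩]
      · rw [if_neg hn, if_neg (by tauto), mul_zero]
    · rw [if_neg hh]
      symm; apply Finset.sum_eq_zero; intro n _; rw [if_neg (by tauto)]
  rw [Finset.sum_congr rfl hG]
  simp only [Finset.mul_sum, mul_ite, mul_zero]
  -- convert to sums over product finsets
  rw [← Finset.sum_product'
    (f := fun (h : ℤ) (n : ℕ) => if |(h:ℝ)| ≤ H ∧ X ≤ (n:ℝ) ∧ (n:ℝ) ≤ 2*X then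
      (1 - ((|(h:ℝ)| : ℝ) : ℂ) / (H:ℂ)) * (f₁ n * f₂ ((n:ℤ) + h).toNat * f₃ ((n:ℤ) + 2*h).toNat)
      else 0)]
  have hre : ∀ n₁ : ℕ, (∑ n₃ ∈ Finset.range N, ∑ n₂ ∈ Finset.range N,
      (if ((n₁:ℤ) + (n₃:ℤ) = 2*(n₂:ℤ)) ∧ |(n₁:ℝ) - (n₃:ℝ)| ≤ 2*H then
        1/(2*(H:ℂ)) * (((2*H - |(n₁:ℝ) - (n₃:ℝ)| : ℝ):ℂ) * (f₁ n₁ * f₃ n₃ * f₂ n₂)) else 0))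
      = ∑ q ∈ Finset.range N ×ˢ Finset.range N,
        (if ((n₁:ℤ) + (q.1:ℤ) = 2*(q.2:ℤ)) ∧ |(n₁:ℝ) - (q.1:ℝ)| ≤ 2*H then
          1/(2*(H:ℂ)) * (((2*H - |(n₁:ℝ) - (q.1:ℝ)| : ℝ):ℂ) * (f₁ n₁ * f₃ q.1 * f₂ q.2)) else 0) := by
    intro n₁
    rw [Finset.sum_product]
  simp only [hre]
  rw [← Finset.sum_product'
    (f := fun (n₁ : ℕ) (q : ℕ × ℕ) =>
      if ((n₁:ℤ) + (q.1:ℤ) = 2*(q.2:ℤ)) ∧ |(n₁:ℝ) - (q.1:ℝ)| ≤ 2*H then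
        1/(2*(H:ℂ)) * (((2*H - |(n₁:ℝ) - (q.1:ℝ)| : ℝ):ℂ) * (f₁ n₁ * f₃ q.1 * f₂ q.2)) else 0)]
  rw [← Finset.sum_filter_ne_zero (Finset.Icc (-(M:ℤ)) (M:ℤ) ×ˢ Finset.range N)]
  rw [← Finset.sum_filter_ne_zero (Finset.range N ×ˢ (Finset.range N ×ˢ Finset.range N))]
  have hHC : (H:ℂ) ≠ 0 := by exact_mod_cast hH.ne'
  have hLfact : ∀ (h : ℤ) (n : ℕ),
      (if |(h:ℝ)| ≤ H ∧ X ≤ (n:ℝ) ∧ (n:ℝ) ≤ 2*X then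
        (1 - ((|(h:ℝ)|:ℝ):ℂ)/(H:ℂ)) * (f₁ n * f₂ ((n:ℤ)+h).toNat * f₃ ((n:ℤ)+2*h).toNat)
        else 0) ≠ 0 →
      |(h:ℝ)| ≤ H ∧ f₁ n ≠ 0 ∧ f₂ (((n:ℤ)+h).toNat) ≠ 0 ∧ f₃ (((n:ℤ)+2*h).toNat) ≠ 0 ∧
        ((((n:ℤ)+h).toNat : ℤ) = (n:ℤ)+h) ∧ ((((n:ℤ)+2*h).toNat : ℤ) = (n:ℤ)+2*h) := by
    intro h n hne
    by_cases hcond : |(h:ℝ)| ≤ H ∧ X ≤ (n:ℝ) ∧ (n:ℝ) ≤ 2*X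
    swap
    · exact absurd (if_neg hcond) hne
    rw [if_pos hcond] at hne
    have hf1n : f₁ n ≠ 0 := fun hz => hne (by simp [hz])
    have hf2n : f₂ (((n:ℤ)+h).toNat) ≠ 0 := fun hz => hne (by simp [hz])
    have hf3n : f₃ (((n:ℤ)+2*h).toNat) ≠ 0 := fun hz => hne (by simp [hz])
    have ht1 : 0 ≤ (n:ℤ)+h := by
      by_contra hlt
      push_neg at hlt
      have hz : ((n:ℤ)+h).toNat = 0 := by omega
      rw [hz] at hf2n
      have := (h2 0 hf2n).1
      simp only [Nat.cast_zero] at this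
      linarith
    have ht2 : 0 ≤ (n:ℤ)+2*h := by
      by_contra hlt
      push_neg at hlt
      have hz : ((n:ℤ)+2*h).toNat = 0 := by omega
      rw [hz] at hf3n
      have := (h3 0 hf3n).1
      simp only [Nat.cast_zero] at this
      linarith
    exact ⟨hcond.1, hf1n, hf2n, hf3n, Int.toNat_of_nonneg ht1, Int.toNat_of_nonneg ht2⟩
  have hRfact : ∀ (n₁ n₃ n₂ : ℕ),
      (if ((n₁:ℤ)+(n₃:ℤ) = 2*(n₂:ℤ)) ∧ |(n₁:ℝ)-(n₃:ℝ)| ≤ 2*H then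
        1/(2*(H:ℂ)) * (((2*H - |(n₁:ℝ)-(n₃:ℝ)| : ℝ):ℂ) * (f₁ n₁ * f₃ n₃ * f₂ n₂)) else 0) ≠ 0 →
      ((n₁:ℤ)+(n₃:ℤ) = 2*(n₂:ℤ)) ∧ |(n₁:ℝ)-(n₃:ℝ)| ≤ 2*H ∧
        f₁ n₁ ≠ 0 ∧ f₃ n₃ ≠ 0 ∧ f₂ n₂ ≠ 0 := by
    intro n₁ n₃ n₂ hne
    by_cases hcond : ((n₁:ℤ)+(n₃:ℤ) = 2*(n₂:ℤ)) ∧ |(n₁:ℝ)-(n₃:ℝ)| ≤ 2*H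
    swap
    · exact absurd (if_neg hcond) hne
    rw [if_pos hcond] at hne
    refine ⟨hcond.1, hcond.2, ?_, ?_, ?_⟩
    · exact fun hz => hne (by simp [hz])
    · exact fun hz => hne (by simp [hz])
    · exact fun hz => hne (by simp [hz])
  -- value equality on the left support
  have hval : ∀ (h : ℤ) (n : ℕ), |(h:ℝ)| ≤ H →
      ((((n:ℤ)+h).toNat : ℤ) = (n:ℤ)+h) → ((((n:ℤ)+2*h).toNat : ℤ) = (n:ℤ)+2*h) →
      (X ≤ (n:ℝ) ∧ (n:ℝ) ≤ 2*X) →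
      (if |(h:ℝ)| ≤ H ∧ X ≤ (n:ℝ) ∧ (n:ℝ) ≤ 2*X then
        (1 - ((|(h:ℝ)|:ℝ):ℂ)/(H:ℂ)) * (f₁ n * f₂ ((n:ℤ)+h).toNat * f₃ ((n:ℤ)+2*h).toNat)
        else 0)
      = (if ((n:ℤ) + ((((n:ℤ)+2*h).toNat : ℕ):ℤ) = 2*(((((n:ℤ)+h).toNat : ℕ)):ℤ)) ∧
            |(n:ℝ) - ((((n:ℤ)+2*h).toNat : ℕ):ℝ)| ≤ 2*H then
          1/(2*(H:ℂ)) * (((2*H - |(n:ℝ) - ((((n:ℤ)+2*h).toNat : ℕ):ℝ)| : ℝ):ℂ) *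
            (f₁ n * f₃ (((n:ℤ)+2*h).toNat) * f₂ (((n:ℤ)+h).toNat))) else 0) := by
    intro h n hh ca cb hXn
    have hb_r : ((((n:ℤ)+2*h).toNat : ℕ):ℝ) = (n:ℝ) + 2*(h:ℝ) := by
      have := congrArg (fun z : ℤ => (z:ℝ)) cb
      push_cast at this ⊢
      linarith
    have habs2 : |(n:ℝ) - ((((n:ℤ)+2*h).toNat : ℕ):ℝ)| = 2*|(h:ℝ)| := by
      rw [hb_r, show (n:ℝ) - ((n:ℝ) + 2*(h:ℝ)) = -(2*(h:ℝ)) from by ring, abs_neg, abs_mul]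
      simp
    rw [if_pos ⟨hh, hXn⟩, if_pos ⟨by omega, by rw [habs2]; linarith⟩, habs2]
    push_cast
    field_simp
  refine Finset.sum_nbij'
    (i := fun p : ℤ × ℕ => (p.2, (((p.2:ℤ) + 2*p.1).toNat, ((p.2:ℤ) + p.1).toNat)))
    (j := fun q : ℕ × ℕ × ℕ => ((q.2.2:ℤ) - (q.1:ℤ), q.1))
    ?_ ?_ ?_ ?_ ?_
  · -- hi : maps left filter into right filter
    rintro ⟨h, n⟩ hp
    dsimp only
    rw [Finset.mem_filter] at hp ⊢
    obtain ⟨hmem, hne⟩ := hp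
    rw [Finset.mem_product] at hmem
    obtain ⟨hh, hf1n, hf2n, hf3n, ca, cb⟩ := hLfact h n hne
    have hXn : X ≤ (n:ℝ) ∧ (n:ℝ) ≤ 2*X := by
      by_contra hc
      exact hne (by rw [if_neg (by tauto)])
    have hbN : ((n:ℤ)+2*h).toNat < N := by
      have := hf3 _ hf3n; exact_mod_cast this
    have haN : ((n:ℤ)+h).toNat < N := by
      have := hf2 _ hf2n; exact_mod_cast this
    constructor
    · rw [Finset.mem_product]
      refine ⟨hmem.2, ?_⟩
      rw [Finset.mem_product]
      exact ⟨Finset.mem_range.mpr hbN, Finset.mem_range.mpr haN⟩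
    · rw [← hval h n hh ca cb hXn]
      exact hne
  · -- hj : maps right filter into left filter
    rintro ⟨n₁, n₃, n₂⟩ hq
    dsimp only
    rw [Finset.mem_filter] at hq ⊢
    obtain ⟨hmem, hne⟩ := hq
    rw [Finset.mem_product] at hmem
    obtain ⟨hQ, habs, hf1n, hf3n, hf2n⟩ := hRfact n₁ n₃ n₂ hne
    have hXn1 := h1 n₁ hf1n
    have hh'r : ((((n₂:ℤ) - (n₁:ℤ)) : ℤ):ℝ) = (n₂:ℝ) - (n₁:ℝ) := by push_cast; ring
    have habs' : |(((n₂:ℤ) - (n₁:ℤ) : ℤ):ℝ)| ≤ H := by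
      rw [hh'r]
      have hQr : (n₁:ℝ) + (n₃:ℝ) = 2*(n₂:ℝ) := by exact_mod_cast hQ
      rw [abs_le] at habs ⊢
      constructor <;> [linarith [habs.1, habs.2]; linarith [habs.1, habs.2]]
    constructor
    · rw [Finset.mem_product]
      refine ⟨?_, hmem.1⟩
      rw [Finset.mem_Icc]
      have : |(n₂:ℤ) - (n₁:ℤ)| ≤ (M:ℤ) := by
        have h1' : |(((n₂:ℤ) - (n₁:ℤ) : ℤ):ℝ)| ≤ (M:ℝ) := le_trans habs' hMH
        exact_mod_cast h1'
      have := abs_le.mp this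
      omega
    · -- G (j q) ≠ 0
      have ca : ((((n₁:ℤ)+((n₂:ℤ)-(n₁:ℤ))).toNat : ℕ):ℤ) = (n₁:ℤ)+((n₂:ℤ)-(n₁:ℤ)) := by omega
      have cb : ((((n₁:ℤ)+2*((n₂:ℤ)-(n₁:ℤ))).toNat : ℕ):ℤ) = (n₁:ℤ)+2*((n₂:ℤ)-(n₁:ℤ)) := by
        omega
      have hXn : X ≤ (n₁:ℝ) ∧ (n₁:ℝ) ≤ 2*X := ⟨by linarith [hXn1.1], by linarith [hXn1.2]⟩
      rw [hval ((n₂:ℤ)-(n₁:ℤ)) n₁ habs' ca cb hXn]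
      have e1 : (((n₁:ℤ)+((n₂:ℤ)-(n₁:ℤ))).toNat : ℕ) = n₂ := by omega
      have e2 : (((n₁:ℤ)+2*((n₂:ℤ)-(n₁:ℤ))).toNat : ℕ) = n₃ := by omega
      rw [e1, e2]
      exact hne
  · -- left inverse
    rintro ⟨h, n⟩ hp
    rw [Finset.mem_filter] at hp
    obtain ⟨hh, hf1n, hf2n, hf3n, ca, cb⟩ := hLfact h n hp.2
    dsimp only
    simp only [Prod.mk.injEq]
    refine ⟨by omega, by trivial⟩
  · -- right inverse
    rintro ⟨n₁, n₃, n₂⟩ hq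
    rw [Finset.mem_filter] at hq
    obtain ⟨hQ, habs, hf1n, hf3n, hf2n⟩ := hRfact n₁ n₃ n₂ hq.2
    dsimp only
    simp only [Prod.mk.injEq]
    refine ⟨by trivial, by omega, by omega⟩
  · -- value equality
    rintro ⟨h, n⟩ hp
    rw [Finset.mem_filter] at hp
    obtain ⟨hh, hf1n, hf2n, hf3n, ca, cb⟩ := hLfact h n hp.2
    have hXn : X ≤ (n:ℝ) ∧ (n:ℝ) ≤ 2*X := by
      by_contra hc
      exact hp.2 (by rw [if_neg (by tauto)])
    dsimp only
    exact hval h n hh ca cb hXn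
end

section
/- Let X ≥ 2, H ≥ 1, x ∈ [X, 2X], and let γ be a real number with 0 < |γ| ≤ 1. Then ∫_{x - H}^{x + 3H} ∫_{x - H}^{x + 3H} min(|γ| X, 1/|log(y/z)|) dy dz ≪ H X log X, where the implied constant is absolute. -/
open MeasureTheory

lemma log_lb {M y z : ℝ} (hz : 0 < z) (hzy : z < y) (hyM : y ≤ M) :
    (y - z) / M ≤ Real.log (y / z) := by
  have hy : 0 < y := hz.trans hzy
  have hM : 0 < M := hy.trans_le hyM
  have h1 : Real.log (z / y) ≤ z / y - 1 := Real.log_le_sub_one_of_pos (by positivity)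
  have h2 : Real.log (y / z) = - Real.log (z / y) := by
    rw [← Real.log_inv]; congr 1; field_simp
  have h3 : (y - z) / M ≤ (y - z) / y := by gcongr
  have h4 : (y - z) / y = 1 - z / y := by field_simp
  rw [h2]; linarith

lemma key_bound {X γ y z : ℝ} (hX : 2 ≤ X) (hγ : |γ| ≤ 1)
    (hy : 0 ≤ y) (hz : 0 ≤ z) (hy5 : y ≤ 5 * X) (hz5 : z ≤ 5 * X) :
    min (|γ| * X) (1 / |Real.log (y / z)|) ≤ 10 * X / (|y - z| + 5) := by
  have hX0 : 0 < X := by linarith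
  have hden : 0 < |y - z| + 5 := by positivity
  rcases eq_or_lt_of_le hy with hy0 | hy0
  · calc min (|γ| * X) (1 / |Real.log (y / z)|) ≤ 1 / |Real.log (y / z)| := min_le_right _ _
      _ = 0 := by rw [← hy0]; simp
      _ ≤ 10 * X / (|y - z| + 5) := by positivity
  rcases eq_or_lt_of_le hz with hz0 | hz0
  · calc min (|γ| * X) (1 / |Real.log (y / z)|) ≤ 1 / |Real.log (y / z)| := min_le_right _ _
      _ = 0 := by rw [← hz0]; simp
      _ ≤ 10 * X / (|y - z| + 5) := by positivity
  have hlog : |y - z| / (5 * X) ≤ |Real.log (y / z)| := by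
    rcases lt_trichotomy y z with h | h | h
    · have hl := log_lb hy0 h hz5
      have hpos : 0 ≤ Real.log (z / y) := le_trans (div_nonneg (by linarith) (by positivity)) hl
      have h2 : Real.log (y / z) = - Real.log (z / y) := by
        rw [← Real.log_inv]; congr 1; field_simp
      rw [abs_sub_comm, abs_of_pos (sub_pos.mpr h), h2, abs_neg, abs_of_nonneg hpos]
      exact hl
    · simp [h, div_self (ne_of_gt hz0)]
    · have hl := log_lb hz0 h hy5
      have hpos : 0 ≤ Real.log (y / z) := le_trans (div_nonneg (by linarith) (by positivity)) hl
      rw [abs_of_pos (sub_pos.mpr h), abs_of_nonneg hpos]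
      exact hl
  rcases le_or_gt (|y - z|) 5 with hu | hu
  · calc min (|γ| * X) (1 / |Real.log (y / z)|) ≤ |γ| * X := min_le_left _ _
      _ ≤ X := by nlinarith [abs_nonneg γ]
      _ ≤ 10 * X / (|y - z| + 5) := by
          rw [le_div_iff₀ hden]; nlinarith [abs_nonneg (y - z)]
  · have huz : 0 < |y - z| := by linarith
    have hlp : 0 < |y - z| / (5 * X) := by positivity
    calc min (|γ| * X) (1 / |Real.log (y / z)|) ≤ 1 / |Real.log (y / z)| := min_le_right _ _
      _ ≤ 1 / (|y - z| / (5 * X)) := one_div_le_one_div_of_le hlp hlog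
      _ = 5 * X / |y - z| := one_div_div _ _
      _ ≤ 10 * X / (|y - z| + 5) := by
          rw [div_le_div_iff₀ huz hden]; nlinarith

lemma inner_bound (X H x γ y : ℝ) (hX : 2 ≤ X) (hH : 1 ≤ H) (hHX : H ≤ X)
    (hx1 : X ≤ x) (hx2 : x ≤ 2 * X) (hγ : |γ| ≤ 1)
    (hy : y ∈ Set.Icc (x - H) (x + 3 * H)) :
    (∫ z in (x - H)..(x + 3 * H), min (|γ| * X) (1 / |Real.log (y / z)|))
      ≤ 40 * (X * Real.log X) := by
  have hX0 : 0 < X := by linarith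
  have ha0 : 0 ≤ x - H := by linarith
  have hb5 : x + 3 * H ≤ 5 * X := by linarith
  have hy0 : 0 ≤ y := le_trans ha0 hy.1
  have hy5 : y ≤ 5 * X := le_trans hy.2 hb5
  have hH0 : (0:ℝ) < H := by linarith
  set f : ℝ → ℝ := fun z => min (|γ| * X) (1 / |Real.log (y / z)|) with hf
  set g : ℝ → ℝ := fun z => 10 * X / (|y - z| + 5) with hg
  have hmf : Measurable f := by
    apply Measurable.min measurable_const
    exact measurable_const.div ((Real.measurable_log.comp (measurable_const.div measurable_id)).abs)
  have hfnn : ∀ z, 0 ≤ f z := fun z => le_min (by positivity) (by positivity)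
  have hfint : IntervalIntegrable f volume (x - H) (x + 3 * H) := by
    apply IntervalIntegrable.mono_fun' (g := fun _ => X) intervalIntegrable_const
      hmf.aestronglyMeasurable
    filter_upwards with z
    rw [Real.norm_eq_abs, abs_of_nonneg (hfnn z)]
    exact le_trans (min_le_left _ _) (by nlinarith [abs_nonneg γ])
  have hgc : Continuous g := by
    apply continuous_const.div (((continuous_const.sub continuous_id).abs).add continuous_const)
    intro z; have hz5 : (0:ℝ) < |y - z| + 5 := by positivity
    exact hz5.ne'
  have hgnn : ∀ z, 0 ≤ g z := fun z => by positivity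
  have hstep1 : (∫ z in (x - H)..(x + 3 * H), f z) ≤ ∫ z in (x - H)..(x + 3 * H), g z := by
    apply intervalIntegral.integral_mono_on (by linarith) hfint (hgc.intervalIntegrable (μ := volume) _ _)
    intro z hz
    exact key_bound hX hγ hy0 (le_trans ha0 hz.1) hy5 (le_trans hz.2 hb5)
  have hstep2 : (∫ z in (x - H)..(x + 3 * H), g z) ≤ ∫ z in (y - 4 * H)..(y + 4 * H), g z := by
    have h1 : y - 4 * H ≤ x - H := by linarith [hy.2]
    have h2 : x + 3 * H ≤ y + 4 * H := by linarith [hy.1]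
    have e1 := intervalIntegral.integral_add_adjacent_intervals
      (hgc.intervalIntegrable (μ := volume) (y - 4 * H) (x - H)) (hgc.intervalIntegrable (μ := volume) (x - H) (x + 3 * H))
    have e2 := intervalIntegral.integral_add_adjacent_intervals
      (hgc.intervalIntegrable (μ := volume) (y - 4 * H) (x + 3 * H)) (hgc.intervalIntegrable (μ := volume) (x + 3 * H) (y + 4 * H))
    have n1 : 0 ≤ ∫ z in (y - 4 * H)..(x - H), g z :=
      intervalIntegral.integral_nonneg h1 (fun u _ => hgnn u)
    have n2 : 0 ≤ ∫ z in (x + 3 * H)..(y + 4 * H), g z :=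
      intervalIntegral.integral_nonneg h2 (fun u _ => hgnn u)
    linarith
  have hfe : Continuous (fun u : ℝ => 10 * X / (|u| + 5)) := by
    apply continuous_const.div ((continuous_abs).add continuous_const)
    intro z; have hz5 : (0:ℝ) < |z| + 5 := by positivity
    exact hz5.ne'
  have hval1 : (∫ z in (y - 4 * H)..(y + 4 * H), g z)
      = ∫ u in (-(4 * H))..(4 * H), 10 * X / (|u| + 5) := by
    have h := intervalIntegral.integral_comp_sub_right (a := y - 4 * H) (b := y + 4 * H)
      (fun u => 10 * X / (|u| + 5)) y
    simp only [hg, abs_sub_comm y]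
    rw [h, show y - 4 * H - y = -(4 * H) by ring, show y + 4 * H - y = 4 * H by ring]
  have hval2 : (∫ u in (-(4 * H))..(0:ℝ), 10 * X / (|u| + 5))
      = ∫ u in (0:ℝ)..(4 * H), 10 * X / (|u| + 5) := by
    have h := intervalIntegral.integral_comp_neg (a := (0:ℝ)) (b := 4 * H)
      (fun u => 10 * X / (|u| + 5))
    simp only [abs_neg, neg_zero] at h
    rw [← h]
  have hval3 : (∫ u in (0:ℝ)..(4 * H), 10 * X / (|u| + 5))
      = 10 * X * Real.log ((4 * H + 5) / 5) := by
    have hcg : (∫ u in (0:ℝ)..(4 * H), 10 * X / (|u| + 5))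
        = ∫ u in (0:ℝ)..(4 * H), 10 * X * (u + 5)⁻¹ := by
      apply intervalIntegral.integral_congr
      intro u hu
      rw [Set.uIcc_of_le (by linarith)] at hu
      show 10 * X / (|u| + 5) = 10 * X * (u + 5)⁻¹
      rw [abs_of_nonneg hu.1, div_eq_mul_inv]
    rw [hcg, intervalIntegral.integral_const_mul]
    have h := intervalIntegral.integral_comp_add_right (a := (0:ℝ)) (b := 4 * H)
      (fun u : ℝ => u⁻¹) 5
    rw [h, show (0:ℝ) + 5 = 5 by ring]
    rw [integral_inv]
    rw [Set.uIcc_of_le (by linarith)]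
    intro hmem
    have := hmem.1
    linarith
  have hsplit : (∫ u in (-(4 * H))..(4 * H), 10 * X / (|u| + 5))
      = (∫ u in (-(4 * H))..(0:ℝ), 10 * X / (|u| + 5))
        + ∫ u in (0:ℝ)..(4 * H), 10 * X / (|u| + 5) :=
    (intervalIntegral.integral_add_adjacent_intervals
      (hfe.intervalIntegrable (μ := volume) _ _) (hfe.intervalIntegrable (μ := volume) _ _)).symm
  have hlogle : Real.log ((4 * H + 5) / 5) ≤ 2 * Real.log X := by
    have harg : (4 * H + 5) / 5 ≤ X * X := by nlinarith
    have h1 : Real.log ((4 * H + 5) / 5) ≤ Real.log (X * X) :=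
      Real.log_le_log (by positivity) harg
    rw [Real.log_mul (ne_of_gt hX0) (ne_of_gt hX0)] at h1
    linarith
  have hlognn : 0 ≤ Real.log ((4 * H + 5) / 5) := Real.log_nonneg (by rw [le_div_iff₀ (by norm_num : (0:ℝ) < 5)]; linarith)
  calc (∫ z in (x - H)..(x + 3 * H), f z) ≤ ∫ z in (y - 4 * H)..(y + 4 * H), g z :=
        le_trans hstep1 hstep2
    _ = 2 * (10 * X * Real.log ((4 * H + 5) / 5)) := by
        rw [hval1, hsplit, hval2, hval3]; ring
    _ ≤ 40 * (X * Real.log X) := by nlinarith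

/-- Second-moment kernel bound:
`∫∫ min(|γ|X, 1/|log(y/z)|) dy dz ≪ H X log X` with an absolute implied constant. -/
theorem stmt5 : ∃ C : ℝ, 0 < C ∧ ∀ X H x γ : ℝ,
    2 ≤ X → 1 ≤ H → H ≤ X → X ≤ x → x ≤ 2*X → 0 < |γ| → |γ| ≤ 1 →
    (∫ y in (x - H)..(x + 3*H), ∫ z in (x - H)..(x + 3*H),
        min (|γ| * X) (1 / |Real.log (y / z)|))
      ≤ C * H * X * Real.log X := by
  refine ⟨160, by norm_num, ?_⟩
  intro X H x γ hX hH hHX hx1 hx2 hγ0 hγ1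
  have hlog : 0 ≤ Real.log X := Real.log_nonneg (by linarith)
  by_cases hint : IntervalIntegrable
      (fun y => ∫ z in (x - H)..(x + 3*H), min (|γ| * X) (1 / |Real.log (y / z)|))
      volume (x - H) (x + 3*H)
  · calc (∫ y in (x - H)..(x + 3*H), ∫ z in (x - H)..(x + 3*H),
          min (|γ| * X) (1 / |Real.log (y / z)|))
        ≤ ∫ _ in (x - H)..(x + 3*H), 40 * (X * Real.log X) := by
          apply intervalIntegral.integral_mono_on (by linarith) hint intervalIntegrable_const
          intro y hy
          exact inner_bound X H x γ y hX hH hHX hx1 hx2 hγ1 hy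
      _ = (x + 3*H - (x - H)) * (40 * (X * Real.log X)) := by
          rw [intervalIntegral.integral_const, smul_eq_mul]
      _ = 160 * H * X * Real.log X := by ring
  · rw [intervalIntegral.integral_undef hint]
    positivity
end
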